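/- Let A = (0,0,1,0), B = (0,0,3,0), C = (2,1,1,0), D = (1,2,1,0), E = (1,1,1,1) be points of ℤ⁴_{≥0} and let Σ = Conv(A,B,C,D,E) be the 4-dimensional simplex they span. Then the contribution of Σ to the Kouchnirenko alternating sum, namely 4!·Vol₄(Σ) − 3!·Vol₃(Σ ∩ {t = 0}) − 2!·Vol₂(Σ ∩ {x = y = 0}) (where (x,y,z,t) are the coordinates and only the faces of Σ lying in coordinate subspaces contribute), is negative; explicitly it equals 6 − 6 − 2 = −2. -/

import Mathlib

open MeasureTheory

open Pointwise

def corner (n : ℕ) : Set (Fin n → ℝ) := {x | (∀ i, 0 ≤ x i) ∧ ∑ i, x i ≤ 1}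

lemma slice_eq (n : ℕ) (t : ℝ) (h0 : 0 ≤ t) (h1 : t < 1) :
    {y : Fin n → ℝ | (∀ i, 0 ≤ y i) ∧ t + ∑ i, y i ≤ 1} = (1 - t) • corner n := by
  have hpos : (0:ℝ) < 1 - t := by linarith
  ext y
  constructor
  · rintro ⟨hy, hs⟩
    refine ⟨(1-t)⁻¹ • y, ⟨fun i => ?_, ?_⟩, ?_⟩
    · have h := hy i
      have : (0:ℝ) ≤ (1-t)⁻¹ * y i := by positivity
      simpa using this
    · have : ∑ i, ((1-t)⁻¹ • y) i = (1-t)⁻¹ * ∑ i, y i := by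
        simp [Finset.mul_sum]
      rw [this]
      rw [inv_mul_le_iff₀ hpos]
      linarith
    · simp [smul_smul, mul_inv_cancel₀ hpos.ne']
  · rintro ⟨z, ⟨hz, hzs⟩, rfl⟩
    refine ⟨fun i => ?_, ?_⟩
    · have := hz i
      have : (0:ℝ) ≤ (1-t) * z i := by positivity
      simpa using this
    · have : ∑ i, ((1-t) • z) i = (1-t) * ∑ i, z i := by simp [Finset.mul_sum]
      rw [this]
      nlinarith [hzs]

lemma isClosed_corner (n : ℕ) : IsClosed (corner n) := by
  have h1 : IsClosed {x : Fin n → ℝ | ∀ i, 0 ≤ x i} := by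
    have : {x : Fin n → ℝ | ∀ i, 0 ≤ x i} = ⋂ i, {x | 0 ≤ x i} := by ext; simp
    rw [this]
    exact isClosed_iInter fun i => isClosed_le continuous_const (continuous_apply i)
  have h2 : IsClosed {x : Fin n → ℝ | ∑ i, x i ≤ 1} :=
    isClosed_le (by continuity) continuous_const
  exact h1.inter h2

lemma volume_corner (n : ℕ) :
    volume (corner n) = ENNReal.ofReal (1 / n.factorial) := by
  induction n with
  | zero =>
    have : corner 0 = Set.univ := by
      ext x; simp [corner]
    rw [this]
    simp [volume_pi, Measure.pi_univ]
  | succ n ih =>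
    -- transfer to product space
    have hmp := (volume_preserving_piFinSuccAbove (fun _ : Fin (n+1) => ℝ) 0).symm
    set e := MeasurableEquiv.piFinSuccAbove (fun _ : Fin (n+1) => ℝ) 0 with he
    set T : Set (ℝ × (Fin n → ℝ)) :=
      {p | 0 ≤ p.1 ∧ (∀ i, 0 ≤ p.2 i) ∧ p.1 + ∑ i, p.2 i ≤ 1} with hT
    have hpre : e.symm ⁻¹' (corner (n+1)) = T := by
      ext p
      have hesymm : e.symm p = Fin.cons p.1 p.2 := by
        simp [he, MeasurableEquiv.piFinSuccAbove, Fin.insertNthEquiv]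
      simp only [Set.mem_preimage, hesymm, corner, Set.mem_setOf_eq, hT]
      rw [Fin.forall_fin_succ, Fin.sum_univ_succ]
      simp
      tauto
    have hTmeas : MeasurableSet T := by
      have : IsClosed T := by
        have h1 : IsClosed {p : ℝ × (Fin n → ℝ) | 0 ≤ p.1} :=
          isClosed_le continuous_const continuous_fst
        have h2 : IsClosed {p : ℝ × (Fin n → ℝ) | ∀ i, 0 ≤ p.2 i} := by
          have : {p : ℝ × (Fin n → ℝ) | ∀ i, 0 ≤ p.2 i} = ⋂ i, {p | 0 ≤ p.2 i} := by ext; simp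
          rw [this]
          exact isClosed_iInter fun i =>
            isClosed_le continuous_const ((continuous_apply i).comp continuous_snd)
        have h3 : IsClosed {p : ℝ × (Fin n → ℝ) | p.1 + ∑ i, p.2 i ≤ 1} := by
          apply isClosed_le _ continuous_const
          exact continuous_fst.add (by
            apply continuous_finset_sum
            exact fun i _ => (continuous_apply i).comp continuous_snd)
        exact h1.inter (h2.inter h3)
      exact this.measurableSet
    have hvol : volume (corner (n+1)) = volume T := by
      rw [← hpre]
      exact (hmp.measure_preimage (isClosed_corner (n+1)).measurableSet.nullMeasurableSet).symm
    rw [hvol]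
    -- compute product volume by slices
    have hprod : (volume : Measure (ℝ × (Fin n → ℝ))) = (volume : Measure ℝ).prod volume := rfl
    rw [hprod, Measure.prod_apply hTmeas]
    have hslice : ∀ t : ℝ, t ≠ 1 → volume (Prod.mk t ⁻¹' T) =
        Set.indicator (Set.Ico (0:ℝ) 1)
          (fun t => ENNReal.ofReal ((1-t)^n) * volume (corner n)) t := by
      intro t ht
      rcases lt_trichotomy t 1 with h1 | h1 | h1
      · rcases le_or_gt 0 t with h0 | h0
        · have hmem : t ∈ Set.Ico (0:ℝ) 1 := ⟨h0, h1⟩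
          rw [Set.indicator_of_mem hmem]
          have : Prod.mk t ⁻¹' T = (1 - t) • corner n := by
            rw [← slice_eq n t h0 h1]
            ext y; simp [hT]; tauto
          rw [this, Measure.addHaar_smul]
          congr 1
          rw [abs_of_nonneg (pow_nonneg (by linarith) _)]
          congr 1
          simp
        · have hmem : t ∉ Set.Ico (0:ℝ) 1 := by simp [not_le.mpr h0]
          rw [Set.indicator_of_notMem hmem]
          have : Prod.mk t ⁻¹' T = ∅ := by
            ext y; simp [hT]; intro h; linarith
          simp [this]
      · exact absurd h1 ht
      · have hmem : t ∉ Set.Ico (0:ℝ) 1 := by simp; intro; linarith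
        rw [Set.indicator_of_notMem hmem]
        have : Prod.mk t ⁻¹' T = ∅ := by
          ext y
          simp only [Set.mem_preimage, hT, Set.mem_setOf_eq, Set.mem_empty_iff_false,
            iff_false, not_and]
          intro h0 hy
          have : (0:ℝ) ≤ ∑ i, y i := Finset.sum_nonneg fun i _ => hy i
          linarith
        simp [this]
    have hae : (fun t => volume (Prod.mk t ⁻¹' T)) =ᵐ[volume]
        Set.indicator (Set.Ico (0:ℝ) 1)
          (fun t => ENNReal.ofReal ((1-t)^n) * volume (corner n)) := by
      have h1 : (volume : Measure ℝ) {(1:ℝ)} = 0 := measure_singleton 1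
      have hmem : ({(1:ℝ)}ᶜ : Set ℝ) ∈ ae volume := MeasureTheory.compl_mem_ae_iff.mpr h1
      exact Filter.eventuallyEq_of_mem hmem fun t ht => hslice t (by simpa using ht)
    rw [lintegral_congr_ae hae, lintegral_indicator measurableSet_Ico,
      lintegral_mul_const _ (by
        apply Measurable.ennreal_ofReal
        exact (continuous_const.sub continuous_id).pow n |>.measurable)]
    have hI : (∫⁻ t in Set.Ico (0:ℝ) 1, ENNReal.ofReal ((1-t)^n))
        = ENNReal.ofReal (1 / (n+1)) := by
      have hnn : 0 ≤ᵐ[volume.restrict (Set.Ico (0:ℝ) 1)] fun t => (1-t)^n := by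
        filter_upwards [ae_restrict_mem measurableSet_Ico] with t ht
        exact pow_nonneg (by linarith [ht.2]) n
      have hc : Continuous (fun t : ℝ => (1-t)^n) := (continuous_const.sub continuous_id).pow n
      have hint : IntegrableOn (fun t : ℝ => (1-t)^n) (Set.Ico 0 1) volume :=
        (hc.integrableOn_Icc).mono_set Set.Ico_subset_Icc_self
      rw [← MeasureTheory.ofReal_integral_eq_lintegral_ofReal hint hnn]
      congr 1
      rw [setIntegral_congr_set (Ico_ae_eq_Ioc (μ := volume)),
        ← intervalIntegral.integral_of_le zero_le_one]
      have hcomp := intervalIntegral.integral_comp_sub_left (a := (0:ℝ)) (b := 1)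
        (fun s : ℝ => s ^ n) 1
      simp only [sub_zero, sub_self] at hcomp
      rw [hcomp, integral_pow]
      norm_num
    rw [hI, ih, ← ENNReal.ofReal_mul (by positivity)]
    congr 1
    rw [Nat.factorial_succ]
    push_cast
    have h1 : (0:ℝ) < (n:ℝ) + 1 := by positivity
    have h2 : (0:ℝ) < (n.factorial : ℝ) := by positivity
    field_simp
def M4 : Matrix (Fin 4) (Fin 4) ℝ := !![0,2,1,1; 0,1,2,1; 2,0,0,0; 0,0,0,1]
noncomputable def g4 : (Fin 4 → ℝ) → (Fin 4 → ℝ) := fun s => ![0,0,1,0] + M4.mulVec s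
def M3 : Matrix (Fin 3) (Fin 3) ℝ := !![0,2,1; 0,1,2; 2,0,0]
noncomputable def g3 : (Fin 3 → ℝ) → (Fin 3 → ℝ) := fun s => ![0,0,1] + M3.mulVec s

lemma g4_apply (s : Fin 4 → ℝ) :
    g4 s = ![2*s 1 + s 2 + s 3, s 1 + 2*s 2 + s 3, 1 + 2*s 0, s 3] := by
  funext i
  fin_cases i <;>
    simp [g4, M4, Matrix.mulVec, dotProduct, Fin.sum_univ_four] <;> ring

lemma g3_apply (s : Fin 3 → ℝ) :
    g3 s = ![2*s 1 + s 2, s 1 + 2*s 2, 1 + 2*s 0] := by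
  funext i
  fin_cases i <;>
    simp [g3, M3, Matrix.mulVec, dotProduct, Fin.sum_univ_three] <;> ring

lemma detM4 : M4.det = 6 := by
  simp [M4, Matrix.det_succ_row_zero, Fin.sum_univ_succ, Fin.succAbove, Fin.castSucc, Fin.castAdd, Fin.castLE]
  norm_num

lemma detM3 : M3.det = 6 := by
  simp [M3, Matrix.det_fin_three]
  norm_num

lemma vol_image (n : ℕ) (M : Matrix (Fin n) (Fin n) ℝ) (A : Fin n → ℝ) :
    volume ((fun s => A + M.mulVec s) '' corner n)
      = ENNReal.ofReal |M.det| * volume (corner n) := by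
  have himg : (fun s => A + M.mulVec s) '' corner n
      = A +ᵥ ((Matrix.toLin' M) '' corner n) := by
    rw [← Set.image_vadd, Set.image_image]
    simp [Matrix.toLin'_apply]
  rw [himg, measure_vadd, Measure.addHaar_image_linearMap, LinearMap.det_toLin']

lemma T3_eq : {p : Fin 3 → ℝ | (![p 0, p 1, p 2, 0] : Fin 4 → ℝ) ∈ g4 '' corner 4}
    = g3 '' corner 3 := by
  ext p
  simp only [Set.mem_setOf_eq, Set.mem_image]
  constructor
  · rintro ⟨s, ⟨hnn, hsum⟩, heq⟩
    rw [g4_apply] at heq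
    have h0 := congrFun heq 0
    have h1 := congrFun heq 1
    have h2 := congrFun heq 2
    have h3 := congrFun heq 3
    simp at h0 h1 h2 h3
    rw [Fin.sum_univ_four] at hsum
    refine ⟨![s 0, s 1, s 2], ⟨fun i => by fin_cases i <;> simp [hnn 0, hnn 1, hnn 2], ?_⟩, ?_⟩
    · rw [Fin.sum_univ_three]
      simp
      have := hnn 3
      linarith
    · rw [g3_apply]
      funext j
      fin_cases j <;> simp <;> [rw [← h0]; rw [← h1]; rw [← h2]] <;> rw [h3] <;> ring
  · rintro ⟨u, ⟨hnn, hsum⟩, rfl⟩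
    refine ⟨![u 0, u 1, u 2, 0], ⟨fun i => by fin_cases i <;> simp [hnn 0, hnn 1, hnn 2], ?_⟩, ?_⟩
    · rw [Fin.sum_univ_four]
      rw [Fin.sum_univ_three] at hsum
      simp
      linarith
    · rw [g4_apply, g3_apply]
      funext j
      fin_cases j <;> simp

lemma Sg_eq : {z : ℝ | (![0,0,z,0] : Fin 4 → ℝ) ∈ g4 '' corner 4} = Set.Icc 1 3 := by
  ext z
  simp only [Set.mem_setOf_eq, Set.mem_image, Set.mem_Icc]
  constructor
  · rintro ⟨s, ⟨hnn, hsum⟩, heq⟩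
    rw [g4_apply] at heq
    have h0 := congrFun heq 0
    have h1 := congrFun heq 1
    have h2 := congrFun heq 2
    have h3 := congrFun heq 3
    simp at h0 h1 h2 h3
    rw [Fin.sum_univ_four] at hsum
    have e0 := hnn 0
    have e1 := hnn 1
    have e2 := hnn 2
    have e3 := hnn 3
    constructor <;> [linarith; linarith]
  · rintro ⟨hz1, hz3⟩
    refine ⟨![(z-1)/2, 0, 0, 0], ⟨fun i => by fin_cases i <;> simp <;> linarith, ?_⟩, ?_⟩
    · rw [Fin.sum_univ_four]
      simp
      linarith
    · rw [g4_apply]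
      funext j
      fin_cases j <;> simp <;> ring

lemma convex_corner (n : ℕ) : Convex ℝ (corner n) := by
  intro x hx y hy a b ha hb hab
  constructor
  · intro i
    simpa using add_nonneg (mul_nonneg ha (hx.1 i)) (mul_nonneg hb (hy.1 i))
  · have : ∑ i, (a • x + b • y) i = a * ∑ i, x i + b * ∑ i, y i := by
      simp [Finset.sum_add_distrib, Finset.mul_sum]
    rw [this]
    calc a * ∑ i, x i + b * ∑ i, y i ≤ a * 1 + b * 1 := by
          gcongr; exacts [hx.2, hy.2]
      _ = 1 := by linarith


lemma S_eq : convexHull ℝ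
    ({![0,0,1,0], ![0,0,3,0], ![2,1,1,0], ![1,2,1,0], ![1,1,1,1]} :
      Set (Fin 4 → ℝ)) = g4 '' corner 4 := by
  apply le_antisymm
  · apply convexHull_min
    · intro v hv
      simp only [Set.mem_insert_iff, Set.mem_singleton_iff] at hv
      rcases hv with rfl | rfl | rfl | rfl | rfl
      · exact ⟨![0,0,0,0], ⟨fun i => by fin_cases i <;> norm_num,
          by simp [Fin.sum_univ_four]⟩, by rw [g4_apply]; simp⟩
      · exact ⟨![1,0,0,0], ⟨fun i => by fin_cases i <;> norm_num,
          by simp [Fin.sum_univ_four]⟩, by rw [g4_apply]; simp <;> norm_num⟩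
      · exact ⟨![0,1,0,0], ⟨fun i => by fin_cases i <;> norm_num,
          by simp [Fin.sum_univ_four]⟩, by rw [g4_apply]; simp⟩
      · exact ⟨![0,0,1,0], ⟨fun i => by fin_cases i <;> norm_num,
          by simp [Fin.sum_univ_four]⟩, by rw [g4_apply]; simp⟩
      · exact ⟨![0,0,0,1], ⟨fun i => by fin_cases i <;> norm_num,
          by simp [Fin.sum_univ_four]⟩, by rw [g4_apply]; simp⟩
    · have himg : g4 '' corner 4
          = (fun y => ![0,0,1,0] + y) '' ((Matrix.toLin' M4) '' corner 4) := by
        rw [Set.image_image]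
        simp only [g4, Matrix.toLin'_apply]
        rfl
      rw [himg]
      exact ((convex_corner 4).linear_image (Matrix.toLin' M4)).translate _
  · rintro v ⟨s, ⟨hnn, hsum⟩, rfl⟩
    rw [Fin.sum_univ_four] at hsum
    set w : Fin 5 → ℝ := ![1 - (s 0 + s 1 + s 2 + s 3), s 0, s 1, s 2, s 3] with hw
    set z : Fin 5 → (Fin 4 → ℝ) :=
      ![![0,0,1,0], ![0,0,3,0], ![2,1,1,0], ![1,2,1,0], ![1,1,1,1]] with hz
    have hwsum : ∑ i, w i = 1 := by simp [hw, Fin.sum_univ_five]; ring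
    have h := Finset.centerMass_mem_convexHull (Finset.univ : Finset (Fin 5))
      (w := w) (z := z)
      (by intro i _; fin_cases i <;>
        simp [hw] <;> [linarith; exact hnn 0; exact hnn 1; exact hnn 2; exact hnn 3])
      (by rw [hwsum]; norm_num)
      (s := {![0,0,1,0], ![0,0,3,0], ![2,1,1,0], ![1,2,1,0], ![1,1,1,1]})
      (by intro i _; fin_cases i <;> simp [hz])
    have hcm : Finset.univ.centerMass w z = g4 s := by
      rw [Finset.centerMass, hwsum, inv_one, one_smul, g4_apply]
      funext j
      rw [Fin.sum_univ_five]
      fin_cases j <;> simp [hw, hz] <;> ring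
    rwa [hcm] at h

lemma volume_g4 : volume (g4 '' corner 4) = ENNReal.ofReal (1/4) := by
  have h := vol_image 4 M4 ![0,0,1,0]
  rw [show (fun s => ![(0:ℝ),0,1,0] + M4.mulVec s) = g4 from rfl] at h
  rw [h, detM4, volume_corner, ← ENNReal.ofReal_mul (by norm_num)]
  norm_num [Nat.factorial]

lemma volume_g3 : volume (g3 '' corner 3) = ENNReal.ofReal 1 := by
  have h := vol_image 3 M3 ![0,0,1]
  rw [show (fun s => ![(0:ℝ),0,1] + M3.mulVec s) = g3 from rfl] at h
  rw [h, detM3, volume_corner, ← ENNReal.ofReal_mul (by norm_num)]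
  norm_num [Nat.factorial]


/-- the simplex `Σ = Conv(A,B,C,D,E)` in `ℝ⁴` with
`A=(0,0,1,0), B=(0,0,3,0), C=(2,1,1,0), D=(1,2,1,0), E=(1,1,1,1)` contributes
`4!·Vol₄(Σ) − 3!·Vol₃(Σ∩{t=0}) − Vol₁(Σ∩{x=y=0}) = 6 − 6 − 2 = −2 < 0`
to the Kouchnirenko alternating sum. -/
theorem stmt1 :
    ∀ S : Set (Fin 4 → ℝ),
      S = convexHull ℝ
          ({![0,0,1,0], ![0,0,3,0], ![2,1,1,0], ![1,2,1,0], ![1,1,1,1]} :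
            Set (Fin 4 → ℝ)) →
      ∀ T3 : Set (Fin 3 → ℝ), T3 = {p | (![p 0, p 1, p 2, 0] : Fin 4 → ℝ) ∈ S} →
      ∀ Sg : Set ℝ, Sg = {z | (![0, 0, z, 0] : Fin 4 → ℝ) ∈ S} →
        ((Nat.factorial 4 : ℝ) * (volume S).toReal = 6 ∧
         (Nat.factorial 3 : ℝ) * (volume T3).toReal = 6 ∧
         (volume Sg).toReal = 2) ∧
        (Nat.factorial 4 : ℝ) * (volume S).toReal -
            (Nat.factorial 3 : ℝ) * (volume T3).toReal - (volume Sg).toReal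
          = 6 - 6 - 2 ∧
        (Nat.factorial 4 : ℝ) * (volume S).toReal -
            (Nat.factorial 3 : ℝ) * (volume T3).toReal - (volume Sg).toReal
          < 0 := by
  intro S hS T3 hT3 Sg hSg
  have hSimg : S = g4 '' corner 4 := hS.trans S_eq
  have hvS : (volume S).toReal = 1/4 := by
    rw [hSimg, volume_g4, ENNReal.toReal_ofReal (by norm_num)]
  have hvT : (volume T3).toReal = 1 := by
    rw [hT3]
    have : {p : Fin 3 → ℝ | (![p 0, p 1, p 2, 0] : Fin 4 → ℝ) ∈ S} = g3 '' corner 3 := by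
      rw [hSimg]; exact T3_eq
    rw [this, volume_g3, ENNReal.toReal_ofReal (by norm_num)]
  have hvG : (volume Sg).toReal = 2 := by
    rw [hSg]
    have : {z : ℝ | (![0, 0, z, 0] : Fin 4 → ℝ) ∈ S} = Set.Icc 1 3 := by
      rw [hSimg]; exact Sg_eq
    rw [this, Real.volume_Icc, ENNReal.toReal_ofReal (by norm_num)]
    norm_num
  rw [hvS, hvT, hvG]
  norm_num [Nat.factorial]
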